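/- arXiv:1303.0437 — 5 statements merged into one kernel-verified Lean document; each statement's English description precedes it below -/
import Mathlib

section
/- For each real p with 1 ≤ p ≤ n, the set 𝒫_p = {A ∈ Sym²(ℝⁿ) : λ₁(A) + ⋯ + λ_{⌊p⌋}(A) + (p - ⌊p⌋)·λ_{⌊p⌋+1}(A) ≥ 0} is a closed convex cone in Sym²(ℝⁿ). -/
open Matrix

/-- The eigenvalues of a real symmetric (Hermitian) matrix, in increasing order. -/
noncomputable def sortedEig {n : ℕ} {A : Matrix (Fin n) (Fin n) ℝ}
    (hA : A.IsHermitian) : Fin n → ℝ :=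
  hA.eigenvalues ∘ Tuple.sort hA.eigenvalues

/-- `λ₁(A) + ⋯ + λ_{⌊p⌋}(A) + (p - ⌊p⌋) λ_{⌊p⌋+1}(A)` for a real parameter `p`
(defined to be `0` on non-symmetric matrices). -/
noncomputable def lamSum (n : ℕ) (p : ℝ) (A : Matrix (Fin n) (Fin n) ℝ) : ℝ :=
  if hA : A.IsHermitian then
    (∑ i ∈ Finset.univ.filter (fun i : Fin n => (i : ℕ) < ⌊p⌋₊), sortedEig hA i)
      + (if h : ⌊p⌋₊ < n then (p - ⌊p⌋₊) * sortedEig hA ⟨⌊p⌋₊, h⟩ else 0)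
  else 0

/-- The subequation `𝒫_p` for real `p`: symmetric matrices with
`λ₁ + ⋯ + λ_{⌊p⌋} + (p - ⌊p⌋) λ_{⌊p⌋+1} ≥ 0`. -/
def Pp (n : ℕ) (p : ℝ) : Set (Matrix (Fin n) (Fin n) ℝ) :=
  {A | A.IsHermitian ∧ 0 ≤ lamSum n p A}

section Aux
open Finset

/-- The constraint set: `0 ≤ P ≤ I` (as quadratic forms) with `tr P = p`. -/
def SS (n : ℕ) (p : ℝ) : Set (Matrix (Fin n) (Fin n) ℝ) :=
  {P | (∀ x : Fin n → ℝ, 0 ≤ x ⬝ᵥ (P *ᵥ x)) ∧ (∀ x : Fin n → ℝ, x ⬝ᵥ (P *ᵥ x) ≤ x ⬝ᵥ x)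
      ∧ P.trace = p}

lemma discrete_key (n : ℕ) (k : ℕ) (hk : k < n) (θ : ℝ) (hθ0 : 0 ≤ θ)
    (μ t : Fin n → ℝ) (hμ : Monotone μ) (ht0 : ∀ i, 0 ≤ t i) (ht1 : ∀ i, t i ≤ 1)
    (hts : ∑ i, t i = k + θ) :
    (∑ i ∈ univ.filter (fun i : Fin n => (i:ℕ) < k), μ i) + θ * μ ⟨k, hk⟩ ≤ ∑ i, μ i * t i := by
  set piv : Fin n := ⟨k, hk⟩
  set c : Fin n → ℝ := fun i => if (i:ℕ) < k then 1 else if (i:ℕ) = k then θ else 0 with hc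
  have hcard : (univ.filter (fun i : Fin n => (i:ℕ) < k)).card = k := by
    have h : univ.filter (fun i : Fin n => (i:ℕ) < k) = Finset.Iio piv := by
      ext i; simp only [Finset.mem_filter, Finset.mem_univ, true_and, Finset.mem_Iio]; exact Iff.rfl
    rw [h, Fin.card_Iio]
  have hcs : ∑ i, c i = k + θ := by
    have h : ∀ i : Fin n, c i = (if (i:ℕ) < k then (1:ℝ) else 0) + (if i = piv then θ else 0) := by
      intro i
      have hiff : (i = piv) ↔ ((i:ℕ) = k) := ⟨fun h => h ▸ rfl, fun h => Fin.ext h⟩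
      simp only [hc, hiff]
      rcases lt_trichotomy (i:ℕ) k with h | h | h
      · simp [h, (by omega : ¬ (i:ℕ) = k)]; exact fun h' => absurd h' (by omega)
      · simp [h, h.not_lt]
      · simp [h.not_gt, h.ne']
    rw [Finset.sum_congr rfl (fun i _ => h i), Finset.sum_add_distrib,
      Finset.sum_ite_eq' univ piv (fun _ => θ), Finset.sum_boole]
    simp [hcard]
  have hmc : ∑ i, μ i * c i = (∑ i ∈ univ.filter (fun i : Fin n => (i:ℕ) < k), μ i) + θ * μ piv := by
    have h : ∀ i : Fin n, μ i * c i = (if (i:ℕ) < k then μ i else 0) + (if i = piv then θ * μ piv else 0) := by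
      intro i
      have hiff : (i = piv) ↔ ((i:ℕ) = k) := ⟨fun h => h ▸ rfl, fun h => Fin.ext h⟩
      simp only [hc, hiff]
      rcases lt_trichotomy (i:ℕ) k with h | h | h
      · simp [h, hiff, (by omega : ¬ (i:ℕ) = k)]; exact fun h' => absurd h' (by omega)
      · have hip : i = piv := Fin.ext h
        rw [hip] at h ⊢; simp only [h, lt_self_iff_false, ↓reduceIte]; ring
      · simp [h.not_gt, h.ne']
    rw [Finset.sum_congr rfl (fun i _ => h i), Finset.sum_add_distrib,
      Finset.sum_ite_eq' univ piv (fun _ => θ * μ piv), Finset.sum_ite, Finset.sum_const_zero]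
    simp
  have key : 0 ≤ ∑ i, (μ i - μ piv) * (t i - c i) := by
    apply Finset.sum_nonneg
    intro i _
    rcases lt_trichotomy (i:ℕ) k with h | h | h
    · have h1 : μ i ≤ μ piv := hμ (by exact Fin.mk_le_of_le_val h.le : i ≤ piv)
      have h2 : t i - c i ≤ 0 := by simp [hc, h]; linarith [ht1 i]
      nlinarith [ht1 i]
    · have : i = piv := Fin.ext h
      simp [this]
    · have h1 : μ piv ≤ μ i := hμ (by exact Fin.mk_le_of_le_val h.le : piv ≤ i)
      have h2 : 0 ≤ t i - c i := by simp [hc, h.not_gt, h.ne']; exact ht0 i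
      exact mul_nonneg (by linarith) h2
  have expand : ∑ i, (μ i - μ piv) * (t i - c i)
      = (∑ i, μ i * t i) - (∑ i, μ i * c i) - μ piv * ((∑ i, t i) - (∑ i, c i)) := by
    simp [mul_sub, sub_mul, Finset.sum_sub_distrib, Finset.mul_sum]
    ring
  rw [hts, hcs] at expand
  simp at expand
  linarith [hmc ▸ (expand ▸ key)]

lemma discrete_main (n : ℕ) (p : ℝ) (hp1 : 1 ≤ p) (hpn : p ≤ n)
    (μ t : Fin n → ℝ) (hμ : Monotone μ) (ht0 : ∀ i, 0 ≤ t i) (ht1 : ∀ i, t i ≤ 1)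
    (hts : ∑ i, t i = p) :
    (∑ i ∈ univ.filter (fun i : Fin n => (i:ℕ) < ⌊p⌋₊), μ i)
      + (if h : ⌊p⌋₊ < n then (p - ⌊p⌋₊) * μ ⟨⌊p⌋₊, h⟩ else 0) ≤ ∑ i, μ i * t i := by
  have hp0 : 0 ≤ p := le_trans zero_le_one hp1
  have hfl : (⌊p⌋₊ : ℝ) ≤ p := Nat.floor_le hp0
  by_cases hk : ⌊p⌋₊ < n
  · rw [dif_pos hk]
    exact discrete_key n ⌊p⌋₊ hk (p - ⌊p⌋₊) (by linarith) μ t hμ ht0 ht1 (by rw [hts]; ring)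
  · rw [dif_neg hk]
    have hkn : (n : ℝ) ≤ ⌊p⌋₊ := by exact_mod_cast Nat.cast_le.mpr (not_lt.mp hk)
    have hpn' : p = n := le_antisymm hpn (by linarith)
    have ht : ∀ i ∈ (univ : Finset (Fin n)), t i = 1 := by
      have h0 : ∑ i, (1 - t i) = 0 := by
        rw [Finset.sum_sub_distrib]
        simp [hts, hpn']
      intro i hi
      have := (Finset.sum_eq_zero_iff_of_nonneg (fun i _ => by linarith [ht1 i])).mp h0 i hi
      linarith
    have hfilt : univ.filter (fun i : Fin n => (i:ℕ) < ⌊p⌋₊) = univ := by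
      ext i; simp; exact lt_of_lt_of_le i.2 (not_lt.mp hk)
    rw [hfilt, add_zero]
    apply le_of_eq
    exact Finset.sum_congr rfl (fun i hi => by rw [ht i hi, mul_one])

namespace PpAux

variable {n : ℕ} {A : Matrix (Fin n) (Fin n) ℝ}

lemma trace_eq_sum (hA : A.IsHermitian) (P : Matrix (Fin n) (Fin n) ℝ) :
    (A * P).trace = ∑ i, hA.eigenvalues i *
      ((star (hA.eigenvectorUnitary : Matrix (Fin n) (Fin n) ℝ) * P * (hA.eigenvectorUnitary : Matrix (Fin n) (Fin n) ℝ)) i i) := by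
  set U : Matrix (Fin n) (Fin n) ℝ := (hA.eigenvectorUnitary : Matrix (Fin n) (Fin n) ℝ) with hUdef
  have hspec : A = U * diagonal (RCLike.ofReal ∘ hA.eigenvalues) * star U := hA.spectral_theorem
  have h1 : (A * P).trace = (diagonal (RCLike.ofReal ∘ hA.eigenvalues) * (star U * P * U)).trace := by
    have h2 : (A * P).trace = (U * diagonal (RCLike.ofReal ∘ hA.eigenvalues) * star U * P).trace :=
      congrArg (fun M => (M * P).trace) hspec
    rw [h2, Matrix.mul_assoc, Matrix.mul_assoc, trace_mul_comm U, Matrix.mul_assoc, Matrix.mul_assoc]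
  rw [h1, Matrix.trace]
  congr 1
  ext i
  simp [Matrix.diagonal_mul, Matrix.diag, RCLike.ofReal]

lemma entry_eq_quad (U P : Matrix (Fin n) (Fin n) ℝ) (i : Fin n) :
    (star U * P * U) i i = (fun j => U j i) ⬝ᵥ (P *ᵥ (fun j => U j i)) := by
  simp only [Matrix.mul_apply, dotProduct, Matrix.mulVec, Matrix.star_apply, star_trivial,
    Finset.sum_mul, Finset.mul_sum, dotProduct]
  rw [Finset.sum_comm]
  apply Finset.sum_congr rfl; intro j _
  apply Finset.sum_congr rfl; intro k _
  ring

lemma col_norm_one {U : Matrix (Fin n) (Fin n) ℝ} (hU : star U * U = 1) (i : Fin n) :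
    (fun j => U j i) ⬝ᵥ (fun j => U j i) = 1 := by
  have := congrFun (congrFun hU i) i
  simp [Matrix.mul_apply, Matrix.one_apply, dotProduct, Matrix.star_apply] at this ⊢
  rw [← this]

variable {n : ℕ} {A : Matrix (Fin n) (Fin n) ℝ}

lemma lamSum_le (hA : A.IsHermitian) (p : ℝ) (hp1 : 1 ≤ p) (hpn : p ≤ n)
    {P : Matrix (Fin n) (Fin n) ℝ} (hP : P ∈ SS n p) :
    lamSum n p A ≤ (A * P).trace := by
  obtain ⟨hP0, hP1, htr⟩ := hP
  set U : Matrix (Fin n) (Fin n) ℝ := (hA.eigenvectorUnitary : Matrix (Fin n) (Fin n) ℝ) with hUdef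
  have hUu : star U * U = 1 := (Matrix.mem_unitaryGroup_iff').mp hA.eigenvectorUnitary.2
  have hUu' : U * star U = 1 := (Matrix.mem_unitaryGroup_iff).mp hA.eigenvectorUnitary.2
  set Q : Matrix (Fin n) (Fin n) ℝ := star U * P * U with hQdef
  set σ : Equiv.Perm (Fin n) := Tuple.sort hA.eigenvalues with hσ
  set t : Fin n → ℝ := fun i => Q (σ i) (σ i) with ht
  have hq0 : ∀ i, 0 ≤ Q i i := fun i => by
    rw [hQdef, entry_eq_quad]; exact hP0 _
  have hq1 : ∀ i, Q i i ≤ 1 := fun i => by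
    rw [hQdef, entry_eq_quad]
    calc _ ≤ (fun j => U j i) ⬝ᵥ (fun j => U j i) := hP1 _
    _ = 1 := col_norm_one hUu i
  have htrQ : ∑ i, Q i i = p := by
    have : Q.trace = (P * (U * star U)).trace := by
      rw [hQdef, Matrix.mul_assoc, trace_mul_comm, Matrix.mul_assoc]
    rw [hUu', Matrix.mul_one] at this
    rw [← htr, ← this]; rfl
  have hts : ∑ i, t i = p := by
    rw [← htrQ, ht]
    exact Equiv.sum_comp σ (fun j => Q j j)
  have hmono : Monotone (sortedEig hA) := Tuple.monotone_sort hA.eigenvalues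
  have key := discrete_main n p hp1 hpn (sortedEig hA) t hmono (fun i => hq0 _) (fun i => hq1 _) hts
  have hsum : ∑ i, sortedEig hA i * t i = ∑ j, hA.eigenvalues j * Q j j := by
    rw [← Equiv.sum_comp σ (fun j => hA.eigenvalues j * Q j j)]
    rfl
  rw [lamSum, dif_pos hA, trace_eq_sum hA P]
  rw [hsum] at key
  exact key

noncomputable def cfun (n : ℕ) (p : ℝ) : Fin n → ℝ :=
  fun j => if (j:ℕ) < ⌊p⌋₊ then 1 else if (j:ℕ) = ⌊p⌋₊ then p - ⌊p⌋₊ else 0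

variable {n : ℕ} {A : Matrix (Fin n) (Fin n) ℝ}

lemma cfun_nonneg (p : ℝ) (hp1 : 1 ≤ p) (j : Fin n) : 0 ≤ cfun n p j := by
  have := Nat.floor_le (le_trans zero_le_one hp1)
  unfold cfun; split_ifs <;> simp <;> linarith

lemma cfun_le_one (p : ℝ) (hp1 : 1 ≤ p) (j : Fin n) : cfun n p j ≤ 1 := by
  have := Nat.lt_floor_add_one p
  unfold cfun; split_ifs <;> simp <;> linarith

lemma sum_mul_cfun (p : ℝ) (hp1 : 1 ≤ p) (hpn : p ≤ n) (μ : Fin n → ℝ) :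
    ∑ j, μ j * cfun n p j = (∑ i ∈ univ.filter (fun i : Fin n => (i:ℕ) < ⌊p⌋₊), μ i)
      + (if h : ⌊p⌋₊ < n then (p - ⌊p⌋₊) * μ ⟨⌊p⌋₊, h⟩ else 0) := by
  by_cases hk : ⌊p⌋₊ < n
  · rw [dif_pos hk]
    set piv : Fin n := ⟨⌊p⌋₊, hk⟩
    have h : ∀ i : Fin n, μ i * cfun n p i
        = (if (i:ℕ) < ⌊p⌋₊ then μ i else 0) + (if i = piv then (p - ⌊p⌋₊) * μ piv else 0) := by
      intro i
      have hiff : (i = piv) ↔ ((i:ℕ) = ⌊p⌋₊) := ⟨fun h => h ▸ rfl, fun h => Fin.ext h⟩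
      simp only [cfun, hiff]
      rcases lt_trichotomy (i:ℕ) ⌊p⌋₊ with h | h | h
      · simp [h, hiff, (by omega : ¬ (i:ℕ) = ⌊p⌋₊)]; exact fun h' => absurd h' (by omega)
      · have hip : i = piv := Fin.ext h
        rw [hip] at h ⊢; simp only [h, lt_self_iff_false, ↓reduceIte]; ring
      · simp [h.not_gt, h.ne']
    rw [Finset.sum_congr rfl (fun i _ => h i), Finset.sum_add_distrib,
      Finset.sum_ite_eq' univ piv (fun _ => (p - ⌊p⌋₊) * μ piv), Finset.sum_ite, Finset.sum_const_zero]
    simp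
  · rw [dif_neg hk]
    have hfl : ∀ i : Fin n, (i:ℕ) < ⌊p⌋₊ := fun i => lt_of_lt_of_le i.2 (not_lt.mp hk)
    have hfilt : univ.filter (fun i : Fin n => (i:ℕ) < ⌊p⌋₊) = univ := by
      ext i; simp [hfl i]
    rw [hfilt, add_zero]
    apply Finset.sum_congr rfl
    intro i _
    simp [cfun, hfl i]

lemma sum_cfun (p : ℝ) (hp1 : 1 ≤ p) (hpn : p ≤ n) : ∑ j, cfun n p j = p := by
  have h := sum_mul_cfun (n := n) p hp1 hpn (fun _ => 1)
  simp only [one_mul] at h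
  rw [h]
  have hp0 : (0:ℝ) ≤ p := le_trans zero_le_one hp1
  have hfl : (⌊p⌋₊ : ℝ) ≤ p := Nat.floor_le hp0
  have hkn : ⌊p⌋₊ ≤ n := by
    have := Nat.floor_le_of_le hpn
    simpa using this
  have hcard : (univ.filter (fun i : Fin n => (i:ℕ) < ⌊p⌋₊)).card = ⌊p⌋₊ := by
    by_cases hk : ⌊p⌋₊ < n
    · have heq : univ.filter (fun i : Fin n => (i:ℕ) < ⌊p⌋₊) = Finset.Iio (⟨⌊p⌋₊, hk⟩ : Fin n) := by
        ext i; simp [Fin.lt_def]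
      rw [heq, Fin.card_Iio]
    · have hkn' : ⌊p⌋₊ = n := le_antisymm hkn (not_lt.mp hk)
      have heq : univ.filter (fun i : Fin n => (i:ℕ) < ⌊p⌋₊) = univ := by
        ext i; simp [lt_of_lt_of_le i.2 (not_lt.mp hk)]
      rw [heq, Finset.card_univ, Fintype.card_fin, hkn']
  by_cases hk : ⌊p⌋₊ < n
  · rw [dif_pos hk, Finset.sum_const, hcard]
    simp only [nsmul_eq_mul, mul_one]
    ring
  · rw [dif_neg hk, Finset.sum_const, hcard]
    have h2 : (n:ℝ) ≤ ⌊p⌋₊ := by exact_mod_cast not_lt.mp hk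
    have h3 : p = n := le_antisymm hpn (by linarith)
    simp only [nsmul_eq_mul, mul_one, add_zero, h3]
    simp

lemma exists_opt (hA : A.IsHermitian) (p : ℝ) (hp1 : 1 ≤ p) (hpn : p ≤ n) :
    ∃ P ∈ SS n p, (A * P).trace = lamSum n p A := by
  set U : Matrix (Fin n) (Fin n) ℝ := (hA.eigenvectorUnitary : Matrix (Fin n) (Fin n) ℝ) with hUdef
  have hUu : star U * U = 1 := (Matrix.mem_unitaryGroup_iff').mp hA.eigenvectorUnitary.2
  have hUu' : U * star U = 1 := (Matrix.mem_unitaryGroup_iff).mp hA.eigenvectorUnitary.2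
  set σ : Equiv.Perm (Fin n) := Tuple.sort hA.eigenvalues with hσ
  set c' : Fin n → ℝ := fun j => cfun n p (σ.symm j) with hc'
  set P₀ : Matrix (Fin n) (Fin n) ℝ := U * diagonal c' * star U with hP₀
  have hc'0 : ∀ j, 0 ≤ c' j := fun j => cfun_nonneg p hp1 _
  have hc'1 : ∀ j, c' j ≤ 1 := fun j => cfun_le_one p hp1 _
  have hsum_c' : ∑ j, c' j = p := by
    rw [hc']
    rw [Equiv.sum_comp σ.symm (fun j => cfun n p j)]
    exact sum_cfun p hp1 hpn
  have hT : star U = Uᵀ := by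
    rw [Matrix.star_eq_conjTranspose]
    ext i j
    simp [Matrix.conjTranspose_apply]
  have hmove : ∀ x z : Fin n → ℝ, x ⬝ᵥ (U *ᵥ z) = (star U *ᵥ x) ⬝ᵥ z := by
    intro x z
    rw [Matrix.dotProduct_mulVec x U, hT, Matrix.mulVec_transpose]
  have hquad : ∀ x : Fin n → ℝ, x ⬝ᵥ (P₀ *ᵥ x) = ∑ j, c' j * (star U *ᵥ x) j ^ 2 := by
    intro x
    set y := star U *ᵥ x with hy
    have h1 : P₀ *ᵥ x = U *ᵥ (diagonal c' *ᵥ y) := by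
      rw [hP₀, ← Matrix.mulVec_mulVec, ← Matrix.mulVec_mulVec]
    rw [h1, hmove, ← hy]
    simp [Matrix.mulVec_diagonal, dotProduct]
    apply Finset.sum_congr rfl
    intro j _
    ring
  have hnormsq : ∀ x : Fin n → ℝ, x ⬝ᵥ x = ∑ j, (star U *ᵥ x) j ^ 2 := by
    intro x
    have h1 : x ⬝ᵥ x = x ⬝ᵥ ((U * star U) *ᵥ x) := by rw [hUu', Matrix.one_mulVec]
    rw [h1, ← Matrix.mulVec_mulVec, hmove]
    simp [dotProduct]
    apply Finset.sum_congr rfl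
    intro j _
    ring
  have htr : P₀.trace = p := by
    have h1 : P₀.trace = (diagonal c' * (star U * U)).trace := by
      rw [hP₀, Matrix.mul_assoc, trace_mul_comm U, Matrix.mul_assoc]
    rw [hUu, Matrix.mul_one, trace_diagonal] at h1
    rw [h1, hsum_c']
  refine ⟨P₀, ⟨?_, ?_, htr⟩, ?_⟩
  · intro x
    rw [hquad]
    exact Finset.sum_nonneg fun j _ => mul_nonneg (hc'0 j) (sq_nonneg _)
  · intro x
    rw [hquad, hnormsq]
    apply Finset.sum_le_sum
    intro j _
    nlinarith [sq_nonneg ((star U *ᵥ x) j), hc'0 j, hc'1 j]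
  · -- trace equality
    rw [trace_eq_sum hA P₀]
    have hmid : star U * P₀ * U = diagonal c' := by
      rw [hP₀]
      calc star U * (U * diagonal c' * star U) * U
          = (star U * U) * diagonal c' * (star U * U) := by
            simp only [← Matrix.mul_assoc]
      _ = diagonal c' := by rw [hUu, Matrix.one_mul, Matrix.mul_one]
    rw [show (star (hA.eigenvectorUnitary : Matrix (Fin n) (Fin n) ℝ)) = star U from rfl]
    rw [show (hA.eigenvectorUnitary : Matrix (Fin n) (Fin n) ℝ) = U from rfl]
    rw [hmid]
    have h2 : ∀ i, hA.eigenvalues i * diagonal c' i i = hA.eigenvalues i * c' i := by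
      intro i; rw [Matrix.diagonal_apply_eq]
    rw [Finset.sum_congr rfl (fun i _ => h2 i)]
    have h3 : ∑ i, hA.eigenvalues i * c' i = ∑ j, hA.eigenvalues (σ j) * cfun n p j := by
      rw [← Equiv.sum_comp σ (fun i => hA.eigenvalues i * c' i)]
      apply Finset.sum_congr rfl
      intro j _
      simp [hc']
    rw [h3]
    have h4 : ∀ j, hA.eigenvalues (σ j) = sortedEig hA j := fun j => rfl
    rw [Finset.sum_congr rfl (fun j _ => congrArg (· * cfun n p j) (h4 j))]
    rw [sum_mul_cfun p hp1 hpn (sortedEig hA)]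
    rw [lamSum, dif_pos hA]

end PpAux
end Aux

open PpAux in
/-- For `1 ≤ p ≤ n`, `𝒫_p` is a closed convex cone in `Sym²(ℝⁿ)`. -/
theorem Pp_closed_convex_cone (n : ℕ) (p : ℝ) (hp1 : 1 ≤ p) (hpn : p ≤ n) :
    IsClosed (Pp n p) ∧
    (∀ A ∈ Pp n p, ∀ B ∈ Pp n p, A + B ∈ Pp n p) ∧
    (∀ c : ℝ, 0 ≤ c → ∀ A ∈ Pp n p, c • A ∈ Pp n p) := by
  refine ⟨?_, ?_, ?_⟩
  · -- closedness
    have hset : Pp n p = {A : Matrix (Fin n) (Fin n) ℝ | A.IsHermitian}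
        ∩ ⋂ P ∈ SS n p, {A : Matrix (Fin n) (Fin n) ℝ | 0 ≤ (A * P).trace} := by
      ext A
      constructor
      · rintro ⟨hA, h0⟩
        refine ⟨hA, ?_⟩
        simp only [Set.mem_iInter, Set.mem_setOf_eq]
        intro P hP
        exact le_trans h0 (lamSum_le hA p hp1 hpn hP)
      · rintro ⟨hA, hall⟩
        simp only [Set.mem_iInter, Set.mem_setOf_eq] at hall
        obtain ⟨P₀, hP₀S, heq⟩ := exists_opt hA p hp1 hpn
        exact ⟨hA, heq ▸ hall P₀ hP₀S⟩
    rw [hset]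
    apply IsClosed.inter
    · exact isClosed_eq (continuous_id.matrix_conjTranspose) continuous_id
    · apply isClosed_biInter
      intro P hP
      have hcont : Continuous (fun A : Matrix (Fin n) (Fin n) ℝ => (A * P).trace) :=
        (continuous_id.matrix_mul continuous_const).matrix_trace
      exact IsClosed.preimage hcont isClosed_Ici
  · -- additivity
    rintro A ⟨hA, h0A⟩ B ⟨hB, h0B⟩
    have hAB : (A + B).IsHermitian := hA.add hB
    refine ⟨hAB, ?_⟩
    obtain ⟨P₀, hP₀S, heq⟩ := exists_opt hAB p hp1 hpn
    rw [← heq, Matrix.add_mul, Matrix.trace_add]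
    have h1 := lamSum_le hA p hp1 hpn hP₀S
    have h2 := lamSum_le hB p hp1 hpn hP₀S
    linarith
  · -- scaling
    rintro c hc A ⟨hA, h0A⟩
    have hcA : (c • A).IsHermitian := by
      show (c • A)ᴴ = c • A
      rw [Matrix.conjTranspose_smul, hA.eq]
      simp
    refine ⟨hcA, ?_⟩
    obtain ⟨P₀, hP₀S, heq⟩ := exists_opt hcA p hp1 hpn
    rw [← heq, Matrix.smul_mul, Matrix.trace_smul]
    have h1 := lamSum_le hA p hp1 hpn hP₀S
    have : (0:ℝ) ≤ (A * P₀).trace := le_trans h0A h1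
    simpa using mul_nonneg hc this
end

section
/- For an integer p with 1 ≤ p ≤ n, a symmetric matrix A belongs to the dual cone 𝒫̃_p = -(complement of interior of (-𝒫_p)) if and only if λ_{n-p+1}(A) + ⋯ + λ_n(A) ≥ 0. -/
open Matrix

/-- `λ₁(A) + ⋯ + λ_p(A)` (the `p` smallest eigenvalues), `0` on non-symmetric matrices. -/
noncomputable def lowSum (n p : ℕ) (A : Matrix (Fin n) (Fin n) ℝ) : ℝ :=
  if hA : A.IsHermitian then
    ∑ i ∈ Finset.univ.filter (fun i : Fin n => (i : ℕ) < p), sortedEig hA i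
  else 0

/-- `λ_{n-p+1}(A) + ⋯ + λ_n(A)` (the `p` largest eigenvalues), `0` on non-symmetric ones. -/
noncomputable def topSum (n p : ℕ) (A : Matrix (Fin n) (Fin n) ℝ) : ℝ :=
  if hA : A.IsHermitian then
    ∑ i ∈ Finset.univ.filter (fun i : Fin n => n - p ≤ (i : ℕ)), sortedEig hA i
  else 0

/-- The space `Sym²(ℝⁿ)` of symmetric matrices, as the self-adjoint subtype. -/
abbrev SymSpace (n : ℕ) := selfAdjoint (Matrix (Fin n) (Fin n) ℝ)

/-- `𝒫_p` inside `Sym²(ℝⁿ)`. -/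
def PpSym (n p : ℕ) : Set (SymSpace n) := {A | 0 ≤ lowSum n p A.1}



lemma lowFilter_eq (n p : ℕ) (hpn : p ≤ n) :
    Finset.univ.filter (fun j : Fin n => (j : ℕ) < p) =
      Finset.univ.map ⟨Fin.castLE hpn, Fin.castLE_injective hpn⟩ := by
  ext j
  simp only [Finset.mem_filter, Finset.mem_univ, true_and, Finset.mem_map,
    Function.Embedding.coeFn_mk]
  constructor
  · intro h; exact ⟨⟨j, h⟩, rfl⟩
  · rintro ⟨i, rfl⟩; exact i.2

lemma topFilter_eq (n p : ℕ) (hpn : p ≤ n) :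
    Finset.univ.filter (fun j : Fin n => n - p ≤ (j : ℕ)) =
      Finset.univ.map ⟨fun i : Fin p => (⟨n - p + i, by omega⟩ : Fin n),
        fun a b hab => by simpa [Fin.ext_iff] using hab⟩ := by
  ext j
  simp only [Finset.mem_filter, Finset.mem_univ, true_and, Finset.mem_map,
    Function.Embedding.coeFn_mk]
  constructor
  · intro h
    refine ⟨⟨(j : ℕ) - (n - p), by omega⟩, ?_⟩
    exact Fin.ext (by show n - p + ((j:ℕ) - (n - p)) = j; omega)
  · rintro ⟨i, rfl⟩; show n - p ≤ n - p + (i:ℕ); omega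

lemma card_filter_lt (n p : ℕ) (hpn : p ≤ n) :
    (Finset.univ.filter (fun j : Fin n => (j : ℕ) < p)).card = p := by
  rw [lowFilter_eq n p hpn]; simp

lemma card_filter_top (n p : ℕ) (hpn : p ≤ n) :
    (Finset.univ.filter (fun j : Fin n => n - p ≤ (j : ℕ))).card = p := by
  rw [topFilter_eq n p hpn]; simp

lemma comb_low {n p : ℕ} (hp1 : 1 ≤ p) (hpn : p ≤ n) {μ t : Fin n → ℝ} (hμ : Monotone μ)
    (ht0 : ∀ j, 0 ≤ t j) (ht1 : ∀ j, t j ≤ 1) (htsum : ∑ j, t j = p) :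
    ∑ j ∈ Finset.univ.filter (fun j : Fin n => (j : ℕ) < p), μ j ≤ ∑ j, μ j * t j := by
  set S : Finset (Fin n) := Finset.univ.filter (fun j : Fin n => (j : ℕ) < p) with hS
  set c : ℝ := μ ⟨p - 1, by omega⟩ with hc
  have hcard : S.card = p := card_filter_lt n p hpn
  have h1 : ∀ j ∈ S, μ j + c * t j - c ≤ μ j * t j := by
    intro j hj
    have hjp : (j : ℕ) < p := by simpa [hS] using hj
    have : μ j ≤ c := hμ (by simp [Fin.le_def]; omega)
    nlinarith [ht1 j]
  have h2 : ∀ j ∈ Sᶜ, c * t j ≤ μ j * t j := by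
    intro j hj
    have hjp : ¬ (j : ℕ) < p := by simpa [hS] using hj
    have : c ≤ μ j := hμ (by simp [Fin.le_def]; omega)
    nlinarith [ht0 j]
  have hsplit : ∑ j, μ j * t j = ∑ j ∈ S, μ j * t j + ∑ j ∈ Sᶜ, μ j * t j := by
    rw [Finset.sum_add_sum_compl]
  have htsplit : ∑ j ∈ S, t j + ∑ j ∈ Sᶜ, t j = (p : ℝ) := by
    rw [Finset.sum_add_sum_compl, htsum]
  have hA : ∑ j ∈ S, (μ j + c * t j - c) ≤ ∑ j ∈ S, μ j * t j := Finset.sum_le_sum h1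
  have hB : ∑ j ∈ Sᶜ, c * t j ≤ ∑ j ∈ Sᶜ, μ j * t j := Finset.sum_le_sum h2
  have e1 : ∑ j ∈ S, (μ j + c * t j - c) = ∑ j ∈ S, μ j + c * ∑ j ∈ S, t j - c * p := by
    rw [Finset.sum_sub_distrib, Finset.sum_add_distrib, ← Finset.mul_sum, Finset.sum_const, hcard]
    ring
  have e2 : ∑ j ∈ Sᶜ, c * t j = c * ∑ j ∈ Sᶜ, t j := by rw [Finset.mul_sum]
  have e3 : c * ∑ j ∈ S, t j + c * ∑ j ∈ Sᶜ, t j = c * p := by rw [← mul_add, htsplit]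
  linarith

lemma comb_high {n p : ℕ} (hp1 : 1 ≤ p) (hpn : p ≤ n) {μ t : Fin n → ℝ} (hμ : Monotone μ)
    (ht0 : ∀ j, 0 ≤ t j) (ht1 : ∀ j, t j ≤ 1) (htsum : ∑ j, t j = p) :
    ∑ j, μ j * t j ≤ ∑ j ∈ Finset.univ.filter (fun j : Fin n => n - p ≤ (j : ℕ)), μ j := by
  set T : Finset (Fin n) := Finset.univ.filter (fun j : Fin n => n - p ≤ (j : ℕ)) with hT
  set c : ℝ := μ ⟨n - p, by omega⟩ with hc
  have hcard : T.card = p := card_filter_top n p hpn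
  have h1 : ∀ j ∈ T, μ j * t j ≤ μ j + c * t j - c := by
    intro j hj
    have hjp : n - p ≤ (j : ℕ) := by simpa [hT] using hj
    have : c ≤ μ j := hμ (by simp [Fin.le_def]; omega)
    nlinarith [ht1 j]
  have h2 : ∀ j ∈ Tᶜ, μ j * t j ≤ c * t j := by
    intro j hj
    have hjp : ¬ n - p ≤ (j : ℕ) := by simpa [hT] using hj
    have : μ j ≤ c := hμ (by simp [Fin.le_def]; omega)
    nlinarith [ht0 j]
  have hsplit : ∑ j, μ j * t j = ∑ j ∈ T, μ j * t j + ∑ j ∈ Tᶜ, μ j * t j := by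
    rw [Finset.sum_add_sum_compl]
  have htsplit : ∑ j ∈ T, t j + ∑ j ∈ Tᶜ, t j = (p : ℝ) := by
    rw [Finset.sum_add_sum_compl, htsum]
  have hA : ∑ j ∈ T, μ j * t j ≤ ∑ j ∈ T, (μ j + c * t j - c) := Finset.sum_le_sum h1
  have hB : ∑ j ∈ Tᶜ, μ j * t j ≤ ∑ j ∈ Tᶜ, c * t j := Finset.sum_le_sum h2
  have e1 : ∑ j ∈ T, (μ j + c * t j - c) = ∑ j ∈ T, μ j + c * ∑ j ∈ T, t j - c * p := by
    rw [Finset.sum_sub_distrib, Finset.sum_add_distrib, ← Finset.mul_sum, Finset.sum_const, hcard]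
    ring
  have e2 : ∑ j ∈ Tᶜ, c * t j = c * ∑ j ∈ Tᶜ, t j := by rw [Finset.mul_sum]
  have e3 : c * ∑ j ∈ T, t j + c * ∑ j ∈ Tᶜ, t j = c * p := by rw [← mul_add, htsplit]
  linarith


-- properties of t j = (Wᴴ * W) j j for W with orthonormal rows
lemma t_nonneg {p n : ℕ} (W : Matrix (Fin p) (Fin n) ℝ) (j : Fin n) :
    0 ≤ (Wᴴ * W) j j := by
  simp only [Matrix.mul_apply, Matrix.conjTranspose_apply, star_trivial]
  exact Finset.sum_nonneg fun i _ => mul_self_nonneg _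

lemma t_le_one {p n : ℕ} {W : Matrix (Fin p) (Fin n) ℝ} (hW : W * Wᴴ = 1) (j : Fin n) :
    (Wᴴ * W) j j ≤ 1 := by
  set M := Wᴴ * W with hM
  have hMsymm : ∀ a b, M a b = M b a := by
    intro a b
    simp only [hM, Matrix.mul_apply, Matrix.conjTranspose_apply, star_trivial]
    exact Finset.sum_congr rfl fun i _ => mul_comm _ _
  have hidem : M * M = M := by
    rw [hM, Matrix.mul_assoc, ← Matrix.mul_assoc W, hW, Matrix.one_mul]
  have hsq : (M j j) ^ 2 ≤ M j j := by
    have h1 : (M * M) j j = ∑ k, M j k ^ 2 := by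
      simp only [Matrix.mul_apply]
      refine Finset.sum_congr rfl fun k _ => ?_; rw [sq, hMsymm j k]
    have h2 : (M j j) ^ 2 ≤ ∑ k, M j k ^ 2 :=
      Finset.single_le_sum (f := fun k => M j k ^ 2) (fun k _ => sq_nonneg _) (Finset.mem_univ j)
    calc (M j j) ^ 2 ≤ ∑ k, M j k ^ 2 := h2
    _ = (M * M) j j := h1.symm
    _ = M j j := by rw [hidem]
  nlinarith [hsq]

lemma t_sum {p n : ℕ} {W : Matrix (Fin p) (Fin n) ℝ} (hW : W * Wᴴ = 1) :
    ∑ j, (Wᴴ * W) j j = (p : ℝ) := by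
  have : ∑ j, (Wᴴ * W) j j = (Wᴴ * W).trace := rfl
  rw [this, Matrix.trace_mul_comm, hW, Matrix.trace_one]
  simp


lemma lowSum_eq {n p : ℕ} {C : Matrix (Fin n) (Fin n) ℝ} (hC : C.IsHermitian) :
    lowSum n p C = ∑ i ∈ Finset.univ.filter (fun i : Fin n => (i : ℕ) < p), sortedEig hC i := by
  simp only [lowSum, dif_pos hC]

-- reduction of trace to eigen-coordinates
lemma trace_conj_eq {n p : ℕ} {C : Matrix (Fin n) (Fin n) ℝ} (hC : C.IsHermitian)
    (W : Matrix (Fin p) (Fin n) ℝ) :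
    (W * C * Wᴴ).trace
      = ∑ j, hC.eigenvalues j * (((W * (hC.eigenvectorUnitary : Matrix (Fin n) (Fin n) ℝ))ᴴ * (W * (hC.eigenvectorUnitary : Matrix (Fin n) (Fin n) ℝ))) j j) := by
  set V : Matrix (Fin n) (Fin n) ℝ := (hC.eigenvectorUnitary : Matrix (Fin n) (Fin n) ℝ) with hVdef
  set W' : Matrix (Fin p) (Fin n) ℝ := W * V with hW'def
  have hdiag : Vᴴ * C * V = diagonal hC.eigenvalues := by
    have := (Unitary.conjStarAlgAut_star_apply (S := ℝ) _ _).symm.trans hC.conjStarAlgAut_star_eigenvectorUnitary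
    rw [Matrix.star_eq_conjTranspose] at this
    simpa [RCLike.ofReal_real_eq_id] using this
  have hVV : V * Vᴴ = 1 := by
    have := Unitary.coe_mul_star_self hC.eigenvectorUnitary
    rwa [Unitary.coe_star, Matrix.star_eq_conjTranspose] at this
  have hVV' : Vᴴ * V = 1 := by
    have := Unitary.coe_star_mul_self hC.eigenvectorUnitary
    rwa [Matrix.star_eq_conjTranspose] at this
  have hC' : C = V * diagonal hC.eigenvalues * Vᴴ := by
    rw [← hdiag]
    calc C = (V * Vᴴ) * C * (V * Vᴴ) := by rw [hVV, Matrix.one_mul, Matrix.mul_one]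
    _ = V * (Vᴴ * C * V) * Vᴴ := by noncomm_ring
  have key : W * C * Wᴴ = W' * diagonal hC.eigenvalues * W'ᴴ := by
    conv_lhs => rw [hC']
    rw [hW'def, Matrix.conjTranspose_mul]
    simp only [Matrix.mul_assoc]
  rw [key, Matrix.trace_mul_cycle, Matrix.trace]
  refine Finset.sum_congr rfl fun j _ => ?_
  simp only [Matrix.diag_apply, Matrix.mul_diagonal]
  ring

lemma topSum_eq {n p : ℕ} {C : Matrix (Fin n) (Fin n) ℝ} (hC : C.IsHermitian) :
    topSum n p C = ∑ i ∈ Finset.univ.filter (fun i : Fin n => n - p ≤ (i : ℕ)), sortedEig hC i := by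
  simp only [topSum, dif_pos hC]

lemma rows_ortho_mul_unitary {n p : ℕ} {C : Matrix (Fin n) (Fin n) ℝ} (hC : C.IsHermitian)
    {W : Matrix (Fin p) (Fin n) ℝ} (hW : W * Wᴴ = 1) :
    (W * (hC.eigenvectorUnitary : Matrix (Fin n) (Fin n) ℝ)) *
      (W * (hC.eigenvectorUnitary : Matrix (Fin n) (Fin n) ℝ))ᴴ = 1 := by
  set V : Matrix (Fin n) (Fin n) ℝ := (hC.eigenvectorUnitary : Matrix (Fin n) (Fin n) ℝ)
  have hVV : V * Vᴴ = 1 := by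
    have := Unitary.coe_mul_star_self hC.eigenvectorUnitary
    rwa [Unitary.coe_star, Matrix.star_eq_conjTranspose] at this
  rw [Matrix.conjTranspose_mul, Matrix.mul_assoc, ← Matrix.mul_assoc V, hVV, Matrix.one_mul, hW]

lemma kyFan_low {n p : ℕ} (hp1 : 1 ≤ p) (hpn : p ≤ n) {C : Matrix (Fin n) (Fin n) ℝ}
    (hC : C.IsHermitian) {W : Matrix (Fin p) (Fin n) ℝ} (hW : W * Wᴴ = 1) :
    lowSum n p C ≤ (W * C * Wᴴ).trace := by
  set W' := W * (hC.eigenvectorUnitary : Matrix (Fin n) (Fin n) ℝ) with hW'def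
  have hW' : W' * W'ᴴ = 1 := rows_ortho_mul_unitary hC hW
  set t : Fin n → ℝ := fun j => (W'ᴴ * W') j j with ht
  set σ := Tuple.sort hC.eigenvalues with hσ
  have hsum : ∑ j, (hC.eigenvalues ∘ σ) j * (t ∘ σ) j = ∑ j, hC.eigenvalues j * t j :=
    Equiv.sum_comp σ (fun j => hC.eigenvalues j * t j)
  have hts : ∑ j, (t ∘ σ) j = (p : ℝ) := by
    rw [show ∑ j, (t ∘ σ) j = ∑ j, t j from Equiv.sum_comp σ t]; exact t_sum hW'
  have := comb_low hp1 hpn (Tuple.monotone_sort hC.eigenvalues)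
    (fun j => t_nonneg W' (σ j)) (fun j => t_le_one hW' (σ j)) hts
  rw [trace_conj_eq hC W, lowSum_eq hC]
  calc ∑ i ∈ Finset.univ.filter (fun i : Fin n => (i : ℕ) < p), sortedEig hC i
      ≤ ∑ j, (hC.eigenvalues ∘ σ) j * (t ∘ σ) j := this
    _ = ∑ j, hC.eigenvalues j * t j := hsum

lemma kyFan_high {n p : ℕ} (hp1 : 1 ≤ p) (hpn : p ≤ n) {C : Matrix (Fin n) (Fin n) ℝ}
    (hC : C.IsHermitian) {W : Matrix (Fin p) (Fin n) ℝ} (hW : W * Wᴴ = 1) :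
    (W * C * Wᴴ).trace ≤ topSum n p C := by
  set W' := W * (hC.eigenvectorUnitary : Matrix (Fin n) (Fin n) ℝ) with hW'def
  have hW' : W' * W'ᴴ = 1 := rows_ortho_mul_unitary hC hW
  set t : Fin n → ℝ := fun j => (W'ᴴ * W') j j with ht
  set σ := Tuple.sort hC.eigenvalues with hσ
  have hsum : ∑ j, (hC.eigenvalues ∘ σ) j * (t ∘ σ) j = ∑ j, hC.eigenvalues j * t j :=
    Equiv.sum_comp σ (fun j => hC.eigenvalues j * t j)
  have hts : ∑ j, (t ∘ σ) j = (p : ℝ) := by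
    rw [show ∑ j, (t ∘ σ) j = ∑ j, t j from Equiv.sum_comp σ t]; exact t_sum hW'
  have := comb_high hp1 hpn (Tuple.monotone_sort hC.eigenvalues)
    (fun j => t_nonneg W' (σ j)) (fun j => t_le_one hW' (σ j)) hts
  rw [trace_conj_eq hC W, topSum_eq hC]
  calc ∑ j, hC.eigenvalues j * t j
      = ∑ j, (hC.eigenvalues ∘ σ) j * (t ∘ σ) j := hsum.symm
    _ ≤ _ := this

lemma attain_general {n p : ℕ} {C : Matrix (Fin n) (Fin n) ℝ} (hC : C.IsHermitian)
    (f : Fin p → Fin n) (hf : Function.Injective f) :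
    ∃ W : Matrix (Fin p) (Fin n) ℝ, W * Wᴴ = 1 ∧
      (W * C * Wᴴ).trace = ∑ i, hC.eigenvalues (f i) := by
  set V : Matrix (Fin n) (Fin n) ℝ := (hC.eigenvectorUnitary : Matrix (Fin n) (Fin n) ℝ) with hV
  have hVV' : Vᴴ * V = 1 := by
    have := Unitary.coe_star_mul_self hC.eigenvectorUnitary
    rwa [Matrix.star_eq_conjTranspose] at this
  have hdiag : Vᴴ * C * V = diagonal hC.eigenvalues := by
    have := (Unitary.conjStarAlgAut_star_apply (S := ℝ) _ _).symm.trans hC.conjStarAlgAut_star_eigenvectorUnitary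
    rw [Matrix.star_eq_conjTranspose] at this
    simpa [RCLike.ofReal_real_eq_id] using this
  set W : Matrix (Fin p) (Fin n) ℝ := Matrix.of (fun i j => V j (f i)) with hWdef
  refine ⟨W, ?_, ?_⟩
  · ext i i'
    have h1 : (W * Wᴴ) i i' = (Vᴴ * V) (f i) (f i') := by
      simp [Matrix.mul_apply, Matrix.conjTranspose_apply, hWdef]
    rw [hVV'] at h1
    rw [h1, Matrix.one_apply, Matrix.one_apply]
    simp [hf.eq_iff]
  · have entry : ∀ i, (W * C * Wᴴ) i i = (Vᴴ * C * V) (f i) (f i) := by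
      intro i
      simp [Matrix.mul_apply, Matrix.conjTranspose_apply, hWdef, Finset.sum_mul]
    rw [Matrix.trace]
    calc ∑ i, (W * C * Wᴴ).diag i = ∑ i, (Vᴴ * C * V) (f i) (f i) :=
          Finset.sum_congr rfl fun i _ => entry i
      _ = ∑ i, hC.eigenvalues (f i) := by
          refine Finset.sum_congr rfl fun i _ => ?_
          rw [hdiag, Matrix.diagonal_apply_eq]

lemma attain_low {n p : ℕ} (hpn : p ≤ n) {C : Matrix (Fin n) (Fin n) ℝ} (hC : C.IsHermitian) :
    ∃ W : Matrix (Fin p) (Fin n) ℝ, W * Wᴴ = 1 ∧ (W * C * Wᴴ).trace = lowSum n p C := by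
  obtain ⟨W, hW, htr⟩ := attain_general hC (fun i => Tuple.sort hC.eigenvalues (Fin.castLE hpn i))
    ((Tuple.sort hC.eigenvalues).injective.comp (Fin.castLE_injective hpn))
  refine ⟨W, hW, ?_⟩
  rw [htr, lowSum_eq hC, lowFilter_eq n p hpn, Finset.sum_map]
  rfl

lemma attain_high {n p : ℕ} (hpn : p ≤ n) {C : Matrix (Fin n) (Fin n) ℝ} (hC : C.IsHermitian) :
    ∃ W : Matrix (Fin p) (Fin n) ℝ, W * Wᴴ = 1 ∧ (W * C * Wᴴ).trace = topSum n p C := by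
  obtain ⟨W, hW, htr⟩ := attain_general hC
    (fun i : Fin p => Tuple.sort hC.eigenvalues (⟨n - p + i, by have := i.2; omega⟩ : Fin n))
    ((Tuple.sort hC.eigenvalues).injective.comp (fun a b hab => by simpa [Fin.ext_iff] using hab))
  refine ⟨W, hW, ?_⟩
  rw [htr, topSum_eq hC, topFilter_eq n p hpn, Finset.sum_map]
  rfl


lemma symHerm {n : ℕ} (B : SymSpace n) : B.1.IsHermitian := B.2

lemma topSum_eq_neg {n p : ℕ} (hp1 : 1 ≤ p) (hpn : p ≤ n) {A : Matrix (Fin n) (Fin n) ℝ}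
    (hA : A.IsHermitian) : topSum n p A = - lowSum n p (-A) := by
  have hA' : (-A).IsHermitian := hA.neg
  obtain ⟨W1, hW1, h1⟩ := attain_high hpn hA
  obtain ⟨W0, hW0, h0⟩ := attain_low hpn hA'
  have i1 : lowSum n p (-A) ≤ (W1 * (-A) * W1ᴴ).trace := kyFan_low hp1 hpn hA' hW1
  have e1 : (W1 * (-A) * W1ᴴ).trace = -(W1 * A * W1ᴴ).trace := by
    simp [Matrix.mul_neg, Matrix.neg_mul, Matrix.trace_neg]
  have i0 : (W0 * A * W0ᴴ).trace ≤ topSum n p A := kyFan_high hp1 hpn hA hW0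
  have e0 : (W0 * (-A) * W0ᴴ).trace = -(W0 * A * W0ᴴ).trace := by
    simp [Matrix.mul_neg, Matrix.neg_mul, Matrix.trace_neg]
  rw [e1] at i1
  rw [e0] at h0
  linarith

-- Part (a): boundary / outside
lemma not_interior_of_le {n p : ℕ} (hp1 : 1 ≤ p) (hpn : p ≤ n) (A : SymSpace n)
    (hL : lowSum n p (-A.1) ≤ 0) : -A ∉ interior (PpSym n p) := by
  intro hmem
  have hs : PpSym n p ∈ nhds (-A) := mem_interior_iff_mem_nhds.mp hmem
  have hA' : (-A.1).IsHermitian := (symHerm A).neg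
  -- the curve ε ↦ -A - ε • 1
  have hsa : ∀ ε : ℝ, IsSelfAdjoint (-A.1 - ε • (1 : Matrix (Fin n) (Fin n) ℝ)) := by
    intro ε
    have h1 : IsSelfAdjoint (1 : Matrix (Fin n) (Fin n) ℝ) := IsSelfAdjoint.one _
    have h2 : IsSelfAdjoint ε := star_trivial ε
    exact (A.2.neg).sub (h2.smul h1)
  set g : ℝ → SymSpace n := fun ε => ⟨-A.1 - ε • 1, hsa ε⟩ with hg
  have hgc : Continuous g := by
    apply Continuous.subtype_mk
    exact continuous_const.sub (continuous_id.smul continuous_const)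
  have hg0 : g 0 = -A := by
    apply Subtype.ext
    simp [hg]
  have htend : Filter.Tendsto g (nhdsWithin 0 (Set.Ioi 0)) (nhds (-A)) := by
    rw [← hg0]
    exact (hgc.tendsto 0).mono_left nhdsWithin_le_nhds
  have hev : ∀ᶠ ε in nhdsWithin 0 (Set.Ioi 0), g ε ∈ PpSym n p := htend.eventually_mem hs
  obtain ⟨ε, hgε, hε⟩ := (hev.and (eventually_mem_nhdsWithin)).exists
  -- but lowSum (g ε) < 0
  obtain ⟨W0, hW0, h0⟩ := attain_low (p := p) hpn hA'
  have hB : (-A.1 - ε • (1 : Matrix (Fin n) (Fin n) ℝ)).IsHermitian := hsa ε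
  have hky : lowSum n p (-A.1 - ε • 1) ≤ (W0 * (-A.1 - ε • 1) * W0ᴴ).trace :=
    kyFan_low hp1 hpn hB hW0
  have etr : (W0 * (-A.1 - ε • 1) * W0ᴴ).trace
      = (W0 * (-A.1) * W0ᴴ).trace - ε * p := by
    have : W0 * (-A.1 - ε • 1) * W0ᴴ = W0 * (-A.1) * W0ᴴ - ε • (W0 * W0ᴴ) := by
      rw [Matrix.mul_sub, Matrix.sub_mul]
      congr 1
      rw [Matrix.mul_smul, Matrix.mul_one, Matrix.smul_mul]
    rw [this, Matrix.trace_sub, Matrix.trace_smul, hW0, Matrix.trace_one]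
    simp [smul_eq_mul]
  have hεpos : (0 : ℝ) < ε := hε
  have hp1' : (1 : ℝ) ≤ p := by exact_mod_cast hp1
  have hlow : lowSum n p (-A.1 - ε • 1) < 0 := by
    rw [etr, h0] at hky
    nlinarith
  have : 0 ≤ lowSum n p (-A.1 - ε • 1) := hgε
  linarith

-- trace bound for small perturbations
lemma trace_conj_bound {n p : ℕ} {W : Matrix (Fin p) (Fin n) ℝ} (hW : W * Wᴴ = 1)
    {D : Matrix (Fin n) (Fin n) ℝ} {δ : ℝ} (hδ : 0 ≤ δ) (hD : ∀ j k, |D j k| ≤ δ) :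
    (W * D * Wᴴ).trace ≤ δ * (n * p) := by
  have tr_eq : (W * D * Wᴴ).trace = ∑ i, ∑ k, ∑ j, W i j * D j k * W i k := by
    rw [Matrix.trace]
    refine Finset.sum_congr rfl fun i _ => ?_
    simp only [Matrix.diag_apply, Matrix.mul_apply, Matrix.conjTranspose_apply, star_trivial,
      Finset.sum_mul]
  have step1 : ∀ i : Fin p, ∑ k, ∑ j, W i j * D j k * W i k ≤ δ * (∑ j, |W i j|) ^ 2 := by
    intro i
    have : ∑ k, ∑ j, W i j * D j k * W i k ≤ ∑ k, ∑ j, |W i j| * δ * |W i k| := by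
      refine Finset.sum_le_sum fun k _ => Finset.sum_le_sum fun j _ => ?_
      calc W i j * D j k * W i k ≤ |W i j * D j k * W i k| := le_abs_self _
        _ = |W i j| * |D j k| * |W i k| := by rw [abs_mul, abs_mul]
        _ ≤ |W i j| * δ * |W i k| :=
            mul_le_mul_of_nonneg_right
              (mul_le_mul_of_nonneg_left (hD j k) (abs_nonneg _)) (abs_nonneg _)
    calc ∑ k, ∑ j, W i j * D j k * W i k ≤ ∑ k, ∑ j, |W i j| * δ * |W i k| := this
      _ = δ * (∑ j, |W i j|) ^ 2 := by
          rw [sq]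
          rw [Finset.sum_comm]
          simp only [← Finset.sum_mul, ← Finset.mul_sum]
          ring
  have step2 : ∀ i : Fin p, (∑ j, |W i j|) ^ 2 ≤ n * (W * Wᴴ) i i := by
    intro i
    have h1 : (∑ j, |W i j|) ^ 2 ≤ (((Finset.univ : Finset (Fin n)).card : ℝ)) * ∑ j, |W i j| ^ 2 := by
      exact_mod_cast sq_sum_le_card_mul_sum_sq (s := (Finset.univ : Finset (Fin n)))
        (f := fun j => |W i j|)
    have h2 : (W * Wᴴ) i i = ∑ j, |W i j| ^ 2 := by
      simp only [Matrix.mul_apply, Matrix.conjTranspose_apply, star_trivial, sq_abs]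
      exact Finset.sum_congr rfl fun j _ => (sq (W i j)).symm ▸ rfl
    rw [h2]
    simpa using h1
  have hsum : ∑ i, (W * Wᴴ) i i = (p : ℝ) := by
    have : ∑ i, (W * Wᴴ) i i = (W * Wᴴ).trace := rfl
    rw [this, hW, Matrix.trace_one]
    simp
  calc (W * D * Wᴴ).trace = ∑ i, ∑ k, ∑ j, W i j * D j k * W i k := tr_eq
    _ ≤ ∑ i, δ * (∑ j, |W i j|) ^ 2 := Finset.sum_le_sum fun i _ => step1 i
    _ ≤ ∑ i, δ * (n * (W * Wᴴ) i i) := by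
        refine Finset.sum_le_sum fun i _ => ?_
        exact mul_le_mul_of_nonneg_left (step2 i) hδ
    _ = δ * (n * ∑ i, (W * Wᴴ) i i) := by
        rw [← Finset.mul_sum, ← Finset.mul_sum]
    _ = δ * (n * p) := by rw [hsum]

-- Part (b): interior membership
lemma mem_interior_of_pos {n p : ℕ} (hp1 : 1 ≤ p) (hpn : p ≤ n) (A : SymSpace n)
    (hL : 0 < lowSum n p (-A.1)) : -A ∈ interior (PpSym n p) := by
  set L := lowSum n p (-A.1) with hLdef
  set δ : ℝ := L / (2 * (n * p + 1)) with hδdef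
  have hnp1 : (1:ℝ) ≤ (n:ℝ) * p := by
    have : (1:ℝ) ≤ (n:ℝ) := by exact_mod_cast hp1.trans hpn
    have : (1:ℝ) ≤ (p:ℝ) := by exact_mod_cast hp1
    nlinarith [show (1:ℝ) ≤ (n:ℝ) from by exact_mod_cast hp1.trans hpn]
  have hδpos : 0 < δ := by
    apply div_pos hL
    nlinarith
  have hδbound : δ * ((n:ℝ) * p) < L := by
    rw [hδdef]
    rw [div_mul_eq_mul_div, div_lt_iff₀ (by nlinarith)]
    nlinarith
  set U : Set (SymSpace n) :=
    ⋂ i : Fin n, ⋂ j : Fin n, {B : SymSpace n | |B.1 i j - (-A).1 i j| < δ} with hU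
  have hUopen : IsOpen U := by
    refine isOpen_iInter_of_finite fun i => isOpen_iInter_of_finite fun j => ?_
    have hc : Continuous fun B : SymSpace n => B.1 i j :=
      (continuous_apply j).comp ((continuous_apply i).comp continuous_subtype_val)
    have : {B : SymSpace n | |B.1 i j - (-A).1 i j| < δ}
        = (fun B : SymSpace n => B.1 i j) ⁻¹' (Metric.ball ((-A).1 i j) δ) := by
      ext B
      simp [Metric.mem_ball, Real.dist_eq]
    rw [this]
    exact hc.isOpen_preimage _ Metric.isOpen_ball
  have hmemU : -A ∈ U := by
    simp only [hU, Set.mem_iInter, Set.mem_setOf_eq]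
    intro i j
    simpa using hδpos
  have hUsub : U ⊆ PpSym n p := by
    intro B hB
    have hBH : B.1.IsHermitian := symHerm B
    obtain ⟨W, hW, htr⟩ := attain_low (p := p) hpn hBH
    have hA' : (-A.1).IsHermitian := (symHerm A).neg
    have hky : L ≤ (W * (-A.1) * Wᴴ).trace := kyFan_low hp1 hpn hA' hW
    set D : Matrix (Fin n) (Fin n) ℝ := -A.1 - B.1 with hD
    have hsplit : W * (-A.1) * Wᴴ = W * B.1 * Wᴴ + W * D * Wᴴ := by
      rw [hD, Matrix.mul_sub, Matrix.sub_mul]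
      abel
    have hDbound : ∀ j k, |D j k| ≤ δ := by
      intro j k
      have := Set.mem_iInter.mp (Set.mem_iInter.mp hB j) k
      simp only [Set.mem_setOf_eq] at this
      have h2 : (-A).1 j k = -A.1 j k := rfl
      have : |B.1 j k - (-A).1 j k| < δ := this
      rw [hD]
      have : |(-A.1 - B.1) j k| = |B.1 j k - (-A).1 j k| := by
        rw [h2] at *
        have : (-A.1 - B.1) j k = -(B.1 j k - (-A.1) j k) := by
          simp [Matrix.sub_apply, Matrix.neg_apply]
          ring
        rw [this, abs_neg]
        simp [Matrix.neg_apply]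
      rw [this]
      linarith [Set.mem_iInter.mp (Set.mem_iInter.mp hB j) k]
    have hbound : (W * D * Wᴴ).trace ≤ δ * (n * p) :=
      trace_conj_bound hW (le_of_lt hδpos) hDbound
    have : L ≤ lowSum n p B.1 + δ * (n * p) := by
      rw [hsplit, Matrix.trace_add] at hky
      rw [← htr]
      linarith
    have : 0 ≤ lowSum n p B.1 := by linarith
    exact this
  exact interior_maximal hUsub hUopen hmemU


/-- For integer `1 ≤ p ≤ n`, a symmetric matrix `A` belongs to the dual cone
`𝒫̃_p = {A : -A ∉ int 𝒫_p}` (interior taken in `Sym²(ℝⁿ)`) if and only if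
`λ_{n-p+1}(A) + ⋯ + λ_n(A) ≥ 0`. -/
theorem mem_dual_Pp_iff (n p : ℕ) (hp1 : 1 ≤ p) (hpn : p ≤ n) (A : SymSpace n) :
    -A ∉ interior (PpSym n p) ↔ 0 ≤ topSum n p A.1 := by
  have hA : A.1.IsHermitian := symHerm A
  rw [topSum_eq_neg hp1 hpn hA]
  constructor
  · intro h
    by_contra hc
    push_neg at hc
    have : 0 < lowSum n p (-A.1) := by linarith
    exact h (mem_interior_of_pos hp1 hpn A this)
  · intro h
    exact not_interior_of_le hp1 hpn A (by linarith)
end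

section
/- Let F, M ⊆ Sym²(ℝⁿ) with F closed. Then F + M ⊆ F if and only if F̃ + M ⊆ F̃, where F̃ = {A : -A ∉ int F} is the dual of F. -/
open Matrix

/-- The dual of a subset `F ⊆ Sym²(ℝⁿ)`: `F̃ = {A : -A ∉ int F}`. -/
def dualSet {n : ℕ} (F : Set (SymSpace n)) : Set (SymSpace n) :=
  {A | -A ∉ interior F}

lemma aux_forward {n : ℕ} (S M : Set (SymSpace n))
    (h : ∀ A ∈ S, ∀ B ∈ M, A + B ∈ S) :
    ∀ A ∈ dualSet S, ∀ B ∈ M, A + B ∈ dualSet S := by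
  intro A hA B hB hcon
  apply hA
  have himg : (fun x => x + B) '' interior S ⊆ interior S :=
    interior_maximal (fun x ⟨y, hy, hxy⟩ => hxy ▸ h y (interior_subset hy) B hB)
      ((isOpenMap_add_right B) _ isOpen_interior)
  have hAeq : -A = -(A + B) + B := by abel
  rw [hAeq]
  exact himg ⟨-(A + B), hcon, rfl⟩

lemma interior_preimage_neg {n : ℕ} (s : Set (SymSpace n)) :
    interior (Neg.neg ⁻¹' s) = Neg.neg ⁻¹' interior s :=
  ((Homeomorph.neg (SymSpace n)).preimage_interior s).symm

lemma interior_dual {n : ℕ} (F : Set (SymSpace n)) (hFreg : F = closure (interior F)) :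
    interior (dualSet F) = Neg.neg ⁻¹' (Fᶜ) := by
  have h1 : dualSet F = Neg.neg ⁻¹' ((interior F)ᶜ) := rfl
  rw [h1, interior_preimage_neg, interior_compl, ← hFreg]

lemma dual_dual {n : ℕ} (F : Set (SymSpace n)) (hFreg : F = closure (interior F)) :
    dualSet (dualSet F) = F := by
  ext A
  simp only [dualSet, Set.mem_setOf_eq]
  rw [show {A | -A ∉ interior F} = dualSet F from rfl, interior_dual F hFreg]
  simp

/-- For `F ⊆ Sym²(ℝⁿ)` closed (and topologically regular: `F` is the closure
of its interior) and any `M ⊆ Sym²(ℝⁿ)`, one has `F + M ⊆ F` iff `F̃ + M ⊆ F̃`. -/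
theorem monotonicity_duality (n : ℕ) (F M : Set (SymSpace n))
    (hFclosed : IsClosed F) (hFreg : F = closure (interior F)) :
    (∀ A ∈ F, ∀ B ∈ M, A + B ∈ F) ↔ (∀ A ∈ dualSet F, ∀ B ∈ M, A + B ∈ dualSet F) := by
  constructor
  · exact aux_forward F M
  · intro h
    have h2 := aux_forward (dualSet F) M h
    rwa [dual_dual F hFreg] at h2
end

section
/- The Riesz characteristic of the cone P(δ) = {A ∈ Sym²(ℝⁿ) : A + δ(tr A)I ≥ 0}, defined as sup{p : I - p·P_e ∈ P(δ) for all unit vectors e}, equals (1 + δn)/(1 + δ). -/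
open Matrix

/-- The `δ`-uniformly elliptic cone `P(δ) = {A : A + δ (tr A) I ≥ 0}`. -/
def Pdelta (n : ℕ) (δ : ℝ) : Set (Matrix (Fin n) (Fin n) ℝ) :=
  {A | (A + δ • (A.trace • (1 : Matrix (Fin n) (Fin n) ℝ))).PosSemidef}

lemma quad_aux (n : ℕ) (a p : ℝ) (e x : Fin n → ℝ) :
    x ⬝ᵥ ((a • (1 : Matrix (Fin n) (Fin n) ℝ) - p • vecMulVec e e) *ᵥ x)
      = a * (∑ i, x i ^ 2) - p * (∑ i, e i * x i) ^ 2 := by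
  simp only [dotProduct, mulVec, Matrix.sub_apply, Matrix.smul_apply, one_apply, vecMulVec_apply,
    smul_eq_mul, sub_mul, Finset.sum_sub_distrib, mul_ite, mul_one, mul_zero,
    Finset.sum_ite_eq, Finset.mem_univ, if_true, mul_sub, Finset.mul_sum, Finset.sum_mul]
  ring_nf
  have h1 : ∑ i, ∑ j, (x i * if i = j then a else 0) * x j = ∑ i : Fin n, a * x i ^ 2 := by
    refine Finset.sum_congr rfl fun i _ => ?_
    simp [mul_ite, ite_mul, mul_zero, zero_mul, Finset.sum_ite_eq, Finset.mem_univ, sq]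
    ring
  have h2 : p * (∑ i, e i * x i) ^ 2 = ∑ i, ∑ j, x i * p * e i * e j * x j := by
    rw [sq, Finset.sum_mul_sum, Finset.mul_sum]
    refine Finset.sum_congr rfl fun i _ => ?_
    rw [Finset.mul_sum]
    exact Finset.sum_congr rfl fun j _ => by ring
  rw [h1, h2]; ring

lemma herm_aux (n : ℕ) (a p : ℝ) (e : Fin n → ℝ) :
    (a • (1 : Matrix (Fin n) (Fin n) ℝ) - p • vecMulVec e e).IsHermitian := by
  show _ = _
  ext i j
  simp [Matrix.conjTranspose_apply, Matrix.one_apply, vecMulVec_apply, eq_comm, mul_comm]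

lemma trace_aux (n : ℕ) (p : ℝ) (e : Fin n → ℝ) (he : ∑ i, e i ^ 2 = 1) :
    ((1 : Matrix (Fin n) (Fin n) ℝ) - p • vecMulVec e e).trace = n - p := by
  have : (vecMulVec e e).trace = 1 := by
    rw [← he]; simp [Matrix.trace, Matrix.diag, vecMulVec_apply, sq]
  simp [Matrix.trace_sub, Matrix.trace_smul, this]

lemma matrix_rw (n : ℕ) (p δ : ℝ) (e : Fin n → ℝ) (he : ∑ i, e i ^ 2 = 1) :
    ((1 : Matrix (Fin n) (Fin n) ℝ) - p • vecMulVec e e) +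
      δ • (((1 : Matrix (Fin n) (Fin n) ℝ) - p • vecMulVec e e).trace •
        (1 : Matrix (Fin n) (Fin n) ℝ))
    = (1 + δ * (n - p)) • (1 : Matrix (Fin n) (Fin n) ℝ) - p • vecMulVec e e := by
  rw [trace_aux n p e he, smul_smul, add_smul, one_smul]
  abel

/-- The Riesz characteristic of `P(δ)`,
`sup {p : I - p P_e ∈ P(δ) for all unit e}`, equals `(1 + δn)/(1 + δ)`. -/
theorem riesz_characteristic_Pdelta (n : ℕ) (hn : 1 ≤ n) (δ : ℝ) (hδ : 0 < δ) :
    sSup {p : ℝ | ∀ e : Fin n → ℝ, (∑ i, e i ^ 2 = 1) →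
        ((1 : Matrix (Fin n) (Fin n) ℝ) - p • vecMulVec e e) ∈ Pdelta n δ}
      = (1 + δ * n) / (1 + δ) := by
  have h1δ : (0:ℝ) < 1 + δ := by linarith
  have hset : {p : ℝ | ∀ e : Fin n → ℝ, (∑ i, e i ^ 2 = 1) →
        ((1 : Matrix (Fin n) (Fin n) ℝ) - p • vecMulVec e e) ∈ Pdelta n δ}
      = Set.Iic ((1 + δ * n) / (1 + δ)) := by
    ext p
    simp only [Set.mem_setOf_eq, Set.mem_Iic]
    constructor
    · intro hp
      set e : Fin n → ℝ := Pi.single ⟨0, hn⟩ 1 with he_def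
      have he : ∑ i, e i ^ 2 = 1 := by
        simp [he_def, Pi.single_apply]
      have h := hp e he
      rw [Pdelta, Set.mem_setOf_eq, matrix_rw n p δ e he] at h
      have h2 := h.dotProduct_mulVec_nonneg e
      rw [show (star e : Fin n → ℝ) = e from rfl, quad_aux, he] at h2
      have hee : (∑ i, e i * e i) = 1 := by
        rw [← he]; exact Finset.sum_congr rfl fun i _ => (sq (e i)).symm
      rw [hee] at h2
      rw [le_div_iff₀ h1δ]
      nlinarith
    · intro hp e he
      rw [Pdelta, Set.mem_setOf_eq, matrix_rw n p δ e he]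
      refine .of_dotProduct_mulVec_nonneg (herm_aux _ _ _ _) fun x => ?_
      rw [show (star x : Fin n → ℝ) = x from rfl, quad_aux]
      have hx : (0:ℝ) ≤ ∑ i, x i ^ 2 := Finset.sum_nonneg fun i _ => sq_nonneg _
      have hcs : (∑ i, e i * x i) ^ 2 ≤ (∑ i, e i ^ 2) * ∑ i, x i ^ 2 :=
        Finset.sum_mul_sq_le_sq_mul_sq Finset.univ e x
      rw [he, one_mul] at hcs
      rcases le_or_gt 0 p with hp0 | hp0
      · have : p * (∑ i, e i * x i) ^ 2 ≤ p * ∑ i, x i ^ 2 :=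
          mul_le_mul_of_nonneg_left hcs hp0
        have hc : p * (1 + δ) ≤ 1 + δ * n := by rw [le_div_iff₀ h1δ] at hp; linarith
        have hn' : (1:ℝ) ≤ n := by exact_mod_cast hn
        nlinarith
      · have h1 : 0 ≤ 1 + δ * (n - p) := by
          have hn' : (1:ℝ) ≤ n := by exact_mod_cast hn
          nlinarith
        nlinarith [sq_nonneg (∑ i, e i * x i)]
  rw [hset]
  exact csSup_Iic
end

section
/- Define the Pucci cone 𝒫_{λ,Λ} = {A ∈ Sym²(ℝⁿ) : λ·tr(A⁺) + Λ·tr(A⁻) ≥ 0} for 0 < λ < Λ, where A = A⁺ + A⁻ with A⁺ ≥ 0 and A⁻ ≤ 0 the positive and negative parts. Then its Riesz characteristic sup{p : I - pP_e ∈ 𝒫_{λ,Λ} for all unit e} equals (λ/Λ)(n-1) + 1. -/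
open Matrix

/-- `λ tr(A⁺) + Λ tr(A⁻)`, computed spectrally as
`∑ᵢ (λ max(λᵢ(A),0) + Λ min(λᵢ(A),0))`; `0` on non-symmetric matrices. -/
noncomputable def pucciVal (n : ℕ) (l L : ℝ) (A : Matrix (Fin n) (Fin n) ℝ) : ℝ :=
  if hA : A.IsHermitian then
    ∑ i, (l * max (hA.eigenvalues i) 0 + L * min (hA.eigenvalues i) 0)
  else 0

/-- The Pucci cone `𝒫_{λ,Λ} = {A : λ tr(A⁺) + Λ tr(A⁻) ≥ 0}`. -/
def Pucci (n : ℕ) (l L : ℝ) : Set (Matrix (Fin n) (Fin n) ℝ) :=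
  {A | A.IsHermitian ∧ 0 ≤ pucciVal n l L A}

open Polynomial in
/-- Conjugation by an invertible pair preserves the characteristic polynomial. -/
lemma my_charpoly_conj {n : ℕ} (U V A : Matrix (Fin n) (Fin n) ℝ)
    (hUV : U * V = 1) (hVU : V * U = 1) : (U * A * V).charpoly = A.charpoly := by
  set U' := (C : ℝ →+* ℝ[X]).mapMatrix U with hU'
  set V' := (C : ℝ →+* ℝ[X]).mapMatrix V with hV'
  have hUV' : U' * V' = 1 := by rw [hU', hV', ← _root_.map_mul, hUV, _root_.map_one]
  have hVU' : V' * U' = 1 := by rw [hU', hV', ← _root_.map_mul, hVU, _root_.map_one]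
  have hkey : charmatrix (U * A * V) = U' * charmatrix A * V' := by
    have hs : ∀ M : Matrix (Fin n) (Fin n) ℝ[X],
        Matrix.scalar (Fin n) (X : ℝ[X]) * M = M * Matrix.scalar (Fin n) (X : ℝ[X]) :=
      fun M => (Matrix.scalar_commute (X : ℝ[X]) (fun r' => Commute.all _ _) M).eq
    rw [charmatrix, charmatrix, mul_sub, sub_mul]
    congr 1
    · rw [← hs U', mul_assoc, hUV', mul_one]
    · rw [hU', hV', _root_.map_mul, _root_.map_mul]
  rw [Matrix.charpoly, Matrix.charpoly, hkey, det_mul, det_mul]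
  have h1 : U'.det * V'.det = 1 := by rw [← det_mul, hUV', det_one]
  calc U'.det * (charmatrix A).det * V'.det
      = (charmatrix A).det * (U'.det * V'.det) := by ring
    _ = (charmatrix A).det := by rw [h1, mul_one]

open Polynomial in
lemma my_charpoly_diagonal {n : ℕ} (d : Fin n → ℝ) :
    (diagonal d).charpoly = ∏ i, (X - C (d i)) := by
  have h : charmatrix (diagonal d) = diagonal (fun i => X - C (d i)) := by
    ext i j
    by_cases h : i = j
    · subst h; simp
    · simp [charmatrix_apply_ne _ _ _ h, diagonal_apply_ne _ h]
  rw [Matrix.charpoly, h, det_diagonal]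

open Polynomial in
lemma my_multiset_eq {n : ℕ} (a b : Fin n → ℝ)
    (h : ∏ i, (X - C (a i)) = ∏ i, (X - C (b i))) :
    Multiset.map a Finset.univ.val = Multiset.map b Finset.univ.val := by
  have key : ∀ c : Fin n → ℝ,
      (∏ i, (X - C (c i))).roots = Multiset.map c Finset.univ.val := by
    intro c
    have := Polynomial.roots_multiset_prod_X_sub_C (Multiset.map c Finset.univ.val)
    rw [Multiset.map_map] at this
    rw [Finset.prod_eq_multiset_prod]
    exact this
  rw [← key a, ← key b, h]

open Polynomial in
lemma my_charpoly_eig {n : ℕ} {A : Matrix (Fin n) (Fin n) ℝ} (hA : A.IsHermitian) :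
    A.charpoly = ∏ i, (X - C (hA.eigenvalues i)) := by
  set W : Matrix (Fin n) (Fin n) ℝ := (hA.eigenvectorUnitary : Matrix (Fin n) (Fin n) ℝ) with hW
  have h1 : W * star W = 1 := Unitary.mul_star_self_of_mem hA.eigenvectorUnitary.2
  have h2 : star W * W = 1 := Unitary.star_mul_self_of_mem hA.eigenvectorUnitary.2
  have hst : A = W * diagonal hA.eigenvalues * star W := by
    have h := hA.spectral_theorem
    simpa [RCLike.ofReal_real_eq_id] using h
  calc A.charpoly = (W * diagonal hA.eigenvalues * star W).charpoly := by
        conv_lhs => rw [hst]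
    _ = ∏ i, (X - C (hA.eigenvalues i)) := by
        rw [my_charpoly_conj _ _ _ h1 h2, my_charpoly_diagonal]

open Polynomial in
lemma my_sum_eig {n : ℕ} {A : Matrix (Fin n) (Fin n) ℝ} (hA : A.IsHermitian)
    (U : Matrix (Fin n) (Fin n) ℝ) (hU1 : U * Uᵀ = 1) (hU2 : Uᵀ * U = 1)
    (d : Fin n → ℝ) (hAd : A = U * diagonal d * Uᵀ) (g : ℝ → ℝ) :
    ∑ i, g (hA.eigenvalues i) = ∑ i, g (d i) := by
  have hc : (∏ i, (X - C (hA.eigenvalues i))) = ∏ i, (X - C (d i)) := by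
    rw [← my_charpoly_eig hA, hAd, my_charpoly_conj _ _ _ hU1 hU2, my_charpoly_diagonal]
  have hm := my_multiset_eq _ _ hc
  rw [Finset.sum_eq_multiset_sum, Finset.sum_eq_multiset_sum,
    show (Multiset.map (fun i => g (hA.eigenvalues i)) Finset.univ.val)
      = Multiset.map g (Multiset.map hA.eigenvalues Finset.univ.val) by
        rw [Multiset.map_map]; rfl,
    show (Multiset.map (fun i => g (d i)) Finset.univ.val)
      = Multiset.map g (Multiset.map d Finset.univ.val) by
        rw [Multiset.map_map]; rfl, hm]

/-- An orthogonal matrix whose first column is a given unit vector. -/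
lemma my_exists_U {n : ℕ} [NeZero n] (e : Fin n → ℝ) (he : ∑ i, e i ^ 2 = 1) :
    ∃ U : Matrix (Fin n) (Fin n) ℝ, U * Uᵀ = 1 ∧ Uᵀ * U = 1 ∧ ∀ j, U j 0 = e j := by
  classical
  set v : EuclideanSpace ℝ (Fin n) := (WithLp.equiv 2 _).symm e with hv
  have hvi : ∀ j, v j = e j := fun j => rfl
  have hvv : (inner ℝ v v : ℝ) = 1 := by
    rw [PiLp.inner_apply]
    simpa [hvi, ← sq] using he
  have hone : Orthonormal ℝ (({0} : Set (Fin n)).restrict (fun _ : Fin n => v)) := by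
    rw [orthonormal_iff_ite]
    intro i j
    have hij : i = j := Subtype.ext (by
      have hi := i.2; have hj := j.2
      simp only [Set.mem_singleton_iff] at hi hj
      rw [hi, hj])
    subst hij
    rw [if_pos rfl]; exact hvv
  obtain ⟨b, hb⟩ := hone.exists_orthonormalBasis_extension_of_card_eq
    (by simp [finrank_euclideanSpace]) (v := fun _ : Fin n => v)
  have hb0 : b 0 = v := hb 0 rfl
  refine ⟨Matrix.of (fun j i => b i j), ?_, ?_, ?_⟩
  · rw [mul_eq_one_comm]
    ext i k
    simp only [Matrix.mul_apply, Matrix.transpose_apply, Matrix.of_apply, Matrix.one_apply]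
    have := orthonormal_iff_ite.1 b.orthonormal i k
    rw [PiLp.inner_apply] at this
    simpa [RCLike.inner_apply, mul_comm] using this
  · ext i k
    simp only [Matrix.mul_apply, Matrix.transpose_apply, Matrix.of_apply, Matrix.one_apply]
    have := orthonormal_iff_ite.1 b.orthonormal i k
    rw [PiLp.inner_apply] at this
    simpa [RCLike.inner_apply, mul_comm] using this
  · intro j; simp [hb0, hvi]

lemma my_pucci_val {n : ℕ} [NeZero n] (l L p : ℝ) (e : Fin n → ℝ)
    (he : ∑ i, e i ^ 2 = 1) :
    ((1 : Matrix (Fin n) (Fin n) ℝ) - p • vecMulVec e e).IsHermitian ∧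
    pucciVal n l L ((1 : Matrix (Fin n) (Fin n) ℝ) - p • vecMulVec e e) =
      (l * max (1 - p) 0 + L * min (1 - p) 0) + ((n : ℝ) - 1) * l := by
  classical
  set A : Matrix (Fin n) (Fin n) ℝ := 1 - p • vecMulVec e e with hAdef
  obtain ⟨U, hU1, hU2, hUe⟩ := my_exists_U e he
  set d : Fin n → ℝ := fun i => if i = 0 then 1 - p else 1 with hd
  have hAd : A = U * diagonal d * Uᵀ := by
    ext i j
    have h1 : (U * diagonal d * Uᵀ) i j = ∑ k, U i k * d k * U j k := by
      rw [Matrix.mul_apply]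
      congr 1; ext k
      rw [Matrix.mul_diagonal, Matrix.transpose_apply]
    have h2 : ∀ k, U i k * d k * U j k
        = U i k * U j k - (if k = 0 then p * (U i 0 * U j 0) else 0) := by
      intro k
      by_cases hk : k = 0
      · subst hk; simp [hd]; ring
      · simp [hd, hk]
    rw [h1, Finset.sum_congr rfl (fun k _ => h2 k), Finset.sum_sub_distrib,
      Finset.sum_ite_eq' Finset.univ (0 : Fin n) (fun _ => p * (U i 0 * U j 0))]
    have h3 : ∑ k, U i k * U j k = (U * Uᵀ) i j := by
      rw [Matrix.mul_apply]; rfl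
    rw [h3, hU1]
    simp [hAdef, vecMulVec_apply, hUe]
  have hA : A.IsHermitian := by
    show Aᴴ = A
    ext i j
    simp only [Matrix.conjTranspose_apply, star_trivial, hAdef, Matrix.sub_apply,
      Matrix.smul_apply, vecMulVec_apply, Matrix.one_apply, smul_eq_mul]
    by_cases h : i = j
    · subst h; ring
    · simp only [if_neg h, if_neg (Ne.symm h)]; ring
  refine ⟨hA, ?_⟩
  rw [pucciVal, dif_pos hA]
  have hsum := my_sum_eig hA U hU1 hU2 d hAd (fun t => l * max t 0 + L * min t 0)
  refine hsum.trans ?_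
  have hterm : ∀ i : Fin n, (l * max (d i) 0 + L * min (d i) 0)
      = (if i = 0 then (l * max (1 - p) 0 + L * min (1 - p) 0) - l else 0) + l := by
    intro i
    by_cases hk : i = 0 <;> simp [hd, hk]
  rw [Finset.sum_congr rfl (fun i _ => hterm i), Finset.sum_add_distrib,
    Finset.sum_ite_eq' Finset.univ (0 : Fin n)
      (fun _ => (l * max (1 - p) 0 + L * min (1 - p) 0) - l),
    Finset.sum_const]
  simp only [Finset.mem_univ, if_pos, Finset.card_univ, Fintype.card_fin, nsmul_eq_mul]
  ring

lemma my_alg {nr : ℝ} (hn : 2 ≤ nr) {l L p : ℝ} (hl : 0 < l) (hlL : l < L) :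
    (0 ≤ (l * max (1 - p) 0 + L * min (1 - p) 0) + (nr - 1) * l) ↔
      p ≤ l / L * (nr - 1) + 1 := by
  have hL : 0 < L := hl.trans hlL
  have hq : l / L * L = l := div_mul_cancel₀ _ (ne_of_gt hL)
  rcases le_total p 1 with h | h
  · have h1 : max (1 - p) 0 = 1 - p := max_eq_left (by linarith)
    have h2 : min (1 - p) 0 = 0 := min_eq_right (by linarith)
    rw [h1, h2]
    constructor
    · intro _
      nlinarith [mul_pos (div_pos hl hL) (show (0:ℝ) < nr - 1 by linarith)]
    · intro _; nlinarith
  · have h1 : max (1 - p) 0 = 0 := max_eq_right (by linarith)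
    have h2 : min (1 - p) 0 = 1 - p := min_eq_left (by linarith)
    rw [h1, h2]
    constructor
    · intro hcond; nlinarith
    · intro hcond; nlinarith

/-- The Riesz characteristic of the Pucci cone `𝒫_{λ,Λ}` (for `0 < λ < Λ`)
equals `(λ/Λ)(n-1) + 1`. -/
theorem riesz_characteristic_pucci (n : ℕ) (hn : 2 ≤ n) (l L : ℝ) (hl : 0 < l) (hlL : l < L) :
    sSup {p : ℝ | ∀ e : Fin n → ℝ, (∑ i, e i ^ 2 = 1) →
        ((1 : Matrix (Fin n) (Fin n) ℝ) - p • vecMulVec e e) ∈ Pucci n l L}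
      = (l / L) * (n - 1) + 1 := by
  classical
  haveI : NeZero n := ⟨by omega⟩
  have hnr : (2 : ℝ) ≤ (n : ℝ) := by exact_mod_cast hn
  have hset : {p : ℝ | ∀ e : Fin n → ℝ, (∑ i, e i ^ 2 = 1) →
      ((1 : Matrix (Fin n) (Fin n) ℝ) - p • vecMulVec e e) ∈ Pucci n l L}
      = Set.Iic (l / L * ((n : ℝ) - 1) + 1) := by
    ext p
    constructor
    · intro hp
      set e : Fin n → ℝ := fun i => if i = 0 then 1 else 0 with he'
      have he : ∑ i : Fin n, e i ^ 2 = 1 := by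
        have h1 : ∀ i : Fin n, e i ^ 2 = if i = 0 then 1 else 0 := by
          intro i; by_cases h : i = 0 <;> simp [he', h]
        rw [Finset.sum_congr rfl (fun i _ => h1 i),
          Finset.sum_ite_eq' Finset.univ (0 : Fin n) (fun _ => (1:ℝ))]
        simp
      obtain ⟨_, hval⟩ := my_pucci_val (n := n) l L p e he
      have hmem := hp e he
      have h0 : 0 ≤ pucciVal n l L (1 - p • vecMulVec e e) := hmem.2
      rw [hval] at h0
      exact (my_alg hnr hl hlL).1 h0
    · intro hp e he
      obtain ⟨hA, hval⟩ := my_pucci_val (n := n) l L p e he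
      refine ⟨hA, ?_⟩
      rw [hval]
      exact (my_alg hnr hl hlL).2 hp
  rw [hset, csSup_Iic]
end
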